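/- Let m ≥ 1, a⁺, a⁻ : Fin m → [0,1], and b ∈ (0,1] with b ≤ max_{j} a⁺_j. Define, for each j, x̂_j = min(1, b / a⁺_j) if a⁺_j > 0 and x̂_j = 1 if a⁺_j = 0 (i.e., x̂_j is the product residuum b ←_P a⁺_j). Then x̂ is a solution of the equation ⋁_{j} ((a⁺_j · x_j) ⊔ (a⁻_j · n_P(x_j))) = b, and x̂ is the greatest solution: every solution x satisfies x_j ≤ x̂_j for all j. -/

import Mathlib

open Set

noncomputable def nP (x : ℝ) : ℝ := if x = 0 then 1 else 0

noncomputable def resP (z a : ℝ) : ℝ := if a = 0 then 1 else min 1 (z / a)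

noncomputable def bSup {m : ℕ} (hm : 1 ≤ m) (f : Fin m → ℝ) : ℝ :=
  Finset.univ.sup' ⟨⟨0, hm⟩, Finset.mem_univ _⟩ f

noncomputable def bInf {m : ℕ} (hm : 1 ≤ m) (f : Fin m → ℝ) : ℝ :=
  Finset.univ.inf' ⟨⟨0, hm⟩, Finset.mem_univ _⟩ f

theorem stmt7 (m : ℕ) (hm : 1 ≤ m) (ap am : Fin m → ℝ) (b : ℝ)
    (hap : ∀ j, ap j ∈ Icc (0:ℝ) 1) (ham : ∀ j, am j ∈ Icc (0:ℝ) 1)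
    (hb : b ∈ Ioc (0:ℝ) 1) (hmax : b ≤ bSup hm ap) :
    ((∀ j, resP b (ap j) ∈ Icc (0:ℝ) 1) ∧
      bSup hm (fun j => (ap j * resP b (ap j)) ⊔ (am j * nP (resP b (ap j)))) = b) ∧
    (∀ x : Fin m → ℝ, (∀ j, x j ∈ Icc (0:ℝ) 1) →
      bSup hm (fun j => (ap j * x j) ⊔ (am j * nP (x j))) = b →
      ∀ j, x j ≤ resP b (ap j)) := by
  obtain ⟨hb0, hb1⟩ := hb
  have hrpos : ∀ j, 0 < resP b (ap j) := by
    intro j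
    unfold resP
    split_ifs with h
    · norm_num
    · have hA : 0 < ap j := lt_of_le_of_ne (hap j).1 (Ne.symm h)
      exact lt_min one_pos (div_pos hb0 hA)
  have hr01 : ∀ j, resP b (ap j) ∈ Icc (0:ℝ) 1 := by
    intro j
    refine ⟨(hrpos j).le, ?_⟩
    unfold resP
    split_ifs with h
    · exact le_refl 1
    · exact min_le_left _ _
  have hterm : ∀ j, (ap j * resP b (ap j)) ⊔ (am j * nP (resP b (ap j))) = min (ap j) b := by
    intro j
    have hn : nP (resP b (ap j)) = 0 := by
      unfold nP; rw [if_neg (ne_of_gt (hrpos j))]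
    rw [hn, mul_zero]
    have h1 : ap j * resP b (ap j) = min (ap j) b := by
      unfold resP
      split_ifs with h
      · simp [h, min_eq_left hb0.le]
      · have hA : 0 < ap j := lt_of_le_of_ne (hap j).1 (Ne.symm h)
        rw [mul_min_of_nonneg _ _ hA.le, mul_one, mul_div_cancel₀ _ (ne_of_gt hA)]
    rw [h1]
    have : (0:ℝ) ≤ min (ap j) b := le_min (hap j).1 hb0.le
    exact sup_eq_left.mpr this
  constructor
  · refine ⟨hr01, ?_⟩
    have hne : (Finset.univ : Finset (Fin m)).Nonempty := ⟨⟨0, hm⟩, Finset.mem_univ _⟩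
    show Finset.univ.sup' hne (fun j => (ap j * resP b (ap j)) ⊔ (am j * nP (resP b (ap j)))) = b
    rw [Finset.sup'_congr _ rfl (fun j _ => hterm j)]
    apply le_antisymm
    · exact Finset.sup'_le _ _ (fun j _ => min_le_right _ _)
    · obtain ⟨j0, _, hj0⟩ := Finset.exists_mem_eq_sup' ⟨⟨0, hm⟩, Finset.mem_univ _⟩ ap
      have hbj : b ≤ ap j0 := by rw [← hj0]; exact hmax
      have : min (ap j0) b = b := min_eq_right hbj
      calc b = min (ap j0) b := this.symm
        _ ≤ _ := Finset.le_sup' (fun j => min (ap j) b) (Finset.mem_univ j0)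
  · intro x hx hsol j
    have hle : ap j * x j ≤ b := by
      have := Finset.le_sup' (f := fun j => (ap j * x j) ⊔ (am j * nP (x j)))
        (Finset.mem_univ j)
      rw [show (Finset.univ.sup' _ fun j => (ap j * x j) ⊔ (am j * nP (x j))) = b from hsol] at this
      exact le_trans le_sup_left this
    unfold resP
    split_ifs with h
    · exact (hx j).2
    · have hA : 0 < ap j := lt_of_le_of_ne (hap j).1 (Ne.symm h)
      exact le_min (hx j).2 ((le_div_iff₀' hA).mpr hle)
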